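/- Let V, W be m-dimensional affine subspaces of ℝ^d with sup_{x ∈ [0,1]^d} |π_V(x) − π_W(x)| ≤ ε, where π_V, π_W are orthogonal projections. Let Q be an axis-parallel cube contained in [0,1]^d and set I(Q,W,2ε) = {x ∈ Q ∩ W : dist(x, ∂Q) > 2ε}. Then I(Q,W,2ε) ⊆ π_W(V ∩ Q), and consequently H^m(I(Q,W,2ε)) ≤ H^m(V ∩ Q). -/

import Mathlib

open MeasureTheory EuclideanGeometry

section Aux
variable {d : ℕ}

local notation "E" => EuclideanSpace ℝ (Fin d)

lemma abs_coord_le_norm (u : E) (i : Fin d) : |u i| ≤ ‖u‖ := by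
  rw [EuclideanSpace.norm_eq, ← Real.sqrt_sq_eq_abs]
  apply Real.sqrt_le_sqrt
  have h := Finset.single_le_sum (f := fun j => ‖u j‖ ^ 2)
    (fun j _ => by positivity) (Finset.mem_univ i)
  simpa [Real.norm_eq_abs, sq_abs] using h

lemma proj_affine (s : AffineSubspace ℝ (EuclideanSpace ℝ (Fin d))) [Nonempty s]
    (u x : E) :
    (EuclideanGeometry.orthogonalProjection s (u + x) : E)
      = (Submodule.orthogonalProjectionOnto s.direction u : E)
        + (EuclideanGeometry.orthogonalProjection s x : E) := by
  have h := (EuclideanGeometry.orthogonalProjection s).map_vadd x u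
  have h2 := congrArg (Subtype.val) h
  simp only [AffineSubspace.coe_vadd, vadd_eq_add, orthogonalProjection_linear] at h2
  simpa [vadd_eq_add] using h2

lemma lin_close {V W : AffineSubspace ℝ (EuclideanSpace ℝ (Fin d))} [Nonempty V] [Nonempty W]
    {ε : ℝ}
    (hclose : ∀ x ∈ {y : E | ∀ i, 0 ≤ y i ∧ y i ≤ 1},
      dist (EuclideanGeometry.orthogonalProjection V x : E)
        (EuclideanGeometry.orthogonalProjection W x : E) ≤ ε)
    (u : E) :
    ‖(Submodule.orthogonalProjectionOnto V.direction u : E)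
      - (Submodule.orthogonalProjectionOnto W.direction u : E)‖ ≤ 2 * ε * ‖u‖ := by
  have key : ∀ w : E, (∀ i, |w i| ≤ 1) →
      ‖(Submodule.orthogonalProjectionOnto V.direction w : E)
        - (Submodule.orthogonalProjectionOnto W.direction w : E)‖ ≤ 2 * ε := by
    intro w hw
    set a : E := WithLp.toLp 2 (fun i => max (w i) 0) with ha
    set b : E := WithLp.toLp 2 (fun i => max (-(w i)) 0) with hb
    have hamem : a ∈ {y : E | ∀ i, 0 ≤ y i ∧ y i ≤ 1} := by
      intro i
      refine ⟨le_max_right _ _, ?_⟩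
      have := hw i
      simp only [ha]
      rw [abs_le] at this
      exact max_le this.2 zero_le_one
    have hbmem : b ∈ {y : E | ∀ i, 0 ≤ y i ∧ y i ≤ 1} := by
      intro i
      refine ⟨le_max_right _ _, ?_⟩
      have := hw i
      simp only [hb]
      rw [abs_le] at this
      exact max_le (by linarith [this.1]) zero_le_one
    have hab : w + b = a := by
      ext i
      show w i + max (-(w i)) 0 = max (w i) 0
      rcases le_total (w i) 0 with h | h
      · rw [max_eq_left (by linarith), max_eq_right h]; ring
      · rw [max_eq_right (by linarith), max_eq_left h]; ring
    have hVa := proj_affine V w b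
    have hWa := proj_affine W w b
    rw [hab] at hVa hWa
    have heq : (Submodule.orthogonalProjectionOnto V.direction w : E)
        - (Submodule.orthogonalProjectionOnto W.direction w : E)
        = ((EuclideanGeometry.orthogonalProjection V a : E)
            - (EuclideanGeometry.orthogonalProjection W a : E))
          - ((EuclideanGeometry.orthogonalProjection V b : E)
            - (EuclideanGeometry.orthogonalProjection W b : E)) := by
      rw [hVa, hWa]; abel
    rw [heq]
    have h1 := hclose a hamem
    have h2 := hclose b hbmem
    rw [dist_eq_norm] at h1 h2
    calc ‖_ - _‖ ≤ ‖(EuclideanGeometry.orthogonalProjection V a : E)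
            - (EuclideanGeometry.orthogonalProjection W a : E)‖
          + ‖(EuclideanGeometry.orthogonalProjection V b : E)
            - (EuclideanGeometry.orthogonalProjection W b : E)‖ := norm_sub_le _ _
      _ ≤ 2 * ε := by linarith
  rcases eq_or_ne u 0 with rfl | hu
  · simp
  · have hn : (0:ℝ) < ‖u‖ := norm_pos_iff.mpr hu
    have hscale : u = ‖u‖ • ((‖u‖)⁻¹ • u) := by
      rw [smul_smul, mul_inv_cancel₀ (ne_of_gt hn), one_smul]
    have hbd : ∀ i, |((‖u‖)⁻¹ • u) i| ≤ 1 := by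
      intro i
      have : ((‖u‖)⁻¹ • u) i = (‖u‖)⁻¹ * u i := rfl
      rw [this, abs_mul, abs_of_nonneg (by positivity : (0:ℝ) ≤ (‖u‖)⁻¹)]
      calc (‖u‖)⁻¹ * |u i| ≤ (‖u‖)⁻¹ * ‖u‖ :=
            mul_le_mul_of_nonneg_left (abs_coord_le_norm u i) (by positivity)
        _ = 1 := inv_mul_cancel₀ (ne_of_gt hn)
    have hk := key ((‖u‖)⁻¹ • u) hbd
    have hVsm : (Submodule.orthogonalProjectionOnto V.direction u : E)
        = ‖u‖ • ((Submodule.orthogonalProjectionOnto V.direction ((‖u‖)⁻¹ • u) : E)) := by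
      conv_lhs => rw [hscale]
      rw [_root_.map_smul]
      simp
    have hWsm : (Submodule.orthogonalProjectionOnto W.direction u : E)
        = ‖u‖ • ((Submodule.orthogonalProjectionOnto W.direction ((‖u‖)⁻¹ • u) : E)) := by
      conv_lhs => rw [hscale]
      rw [_root_.map_smul]
      simp
    rw [hVsm, hWsm, ← smul_sub, norm_smul, Real.norm_eq_abs, abs_of_pos hn]
    calc ‖u‖ * ‖_‖ ≤ ‖u‖ * (2*ε) := mul_le_mul_of_nonneg_left hk (le_of_lt hn)
      _ = 2 * ε * ‖u‖ := by ring

lemma cube_margin (a : E) (r : ℝ) (hr : 0 < r) (x : E)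
    (hx : ∀ i, a i ≤ x i ∧ x i ≤ a i + r) (i : Fin d) (c : ℝ)
    (hc : c = a i ∨ c = a i + r) :
    Metric.infDist x (frontier {z : E | ∀ i, a i ≤ z i ∧ z i ≤ a i + r}) ≤ |x i - c| := by
  set Q : Set (EuclideanSpace ℝ (Fin d)) := {z : E | ∀ i, a i ≤ z i ∧ z i ≤ a i + r} with hQdef
  set y : EuclideanSpace ℝ (Fin d) := WithLp.toLp 2 (fun j => if j = i then c else x j) with hy
  have hr0 : 0 ≤ r := by
    have := hx i
    linarith [this.1, this.2]
  have hyQ : y ∈ Q := by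
    intro j
    by_cases hj : j = i
    · subst hj
      simp only [hy, if_pos rfl, ↓reduceIte]
      rcases hc with h | h <;> subst h
      · exact ⟨le_refl _, by linarith⟩
      · exact ⟨by linarith, le_refl _⟩
    · simpa [hy, hj] using hx j
  have hyfr : y ∈ frontier Q := by
    constructor
    · exact subset_closure hyQ
    · show y ∈ (interior Q)ᶜ
      rw [← closure_compl]
      rw [mem_closure_iff_seq_limit]
      set σ : ℝ := if c = a i then -1 else 1 with hσ
      refine ⟨fun n => y + (1/(n+1) : ℝ) • EuclideanSpace.single i σ, fun n => ?_, ?_⟩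
      · intro hmem
        have hco := hmem i
        simp only at hco
        have hcoord : (y + (1/(n+1) : ℝ) • EuclideanSpace.single i σ) i
            = c + (1/(n+1) : ℝ) * σ := by
          simp [hy, EuclideanSpace.single_apply]
        rw [hcoord] at hco
        have hpos : (0:ℝ) < 1/(n+1) := by positivity
        rcases hc with h | h
        · have hσ1 : σ = -1 := by rw [hσ, if_pos h]
          rw [hσ1, h] at hco
          have := hco.1
          nlinarith
        · have hσ1 : σ = 1 := by
            rw [hσ, if_neg]
            intro hcc
            rw [h] at hcc
            linarith [hr]
          rw [hσ1, h] at hco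
          have := hco.2
          nlinarith
      · have h0 : Filter.Tendsto (fun n : ℕ => (1/(n+1) : ℝ)) Filter.atTop (nhds 0) :=
          tendsto_one_div_add_atTop_nhds_zero_nat
        have h1 := h0.smul_const (EuclideanSpace.single i σ)
        rw [zero_smul] at h1
        have h2 := h1.const_add y
        rwa [add_zero] at h2
  have hdist : dist x y = |x i - c| := by
    rw [EuclideanSpace.dist_eq]
    have hsum : ∑ j, dist (x j) (y j) ^ 2 = dist (x i) (y i) ^ 2 := by
      apply Finset.sum_eq_single_of_mem i (Finset.mem_univ i)
      intro j _ hj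
      have : y j = x j := by simp [hy, hj]
      rw [this, dist_self]
      norm_num
    rw [hsum]
    have : y i = c := by simp [hy]
    rw [this, Real.sqrt_sq dist_nonneg, Real.dist_eq]
  rw [← hdist]
  exact Metric.infDist_le_dist_of_mem hyfr

end Aux

set_option maxHeartbeats 1000000 in
theorem stmt_5 {d m : ℕ} (hm1 : 1 ≤ m) (hmd : m ≤ d - 1)
    (V W : AffineSubspace ℝ (EuclideanSpace ℝ (Fin d)))
    [Nonempty V] [Nonempty W]
    (hVdim : Module.finrank ℝ V.direction = m)
    (hWdim : Module.finrank ℝ W.direction = m)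
    (ε : ℝ) (hε : 0 < ε)
    (hclose : ∀ x ∈ {y : EuclideanSpace ℝ (Fin d) | ∀ i, 0 ≤ y i ∧ y i ≤ 1},
      dist (EuclideanGeometry.orthogonalProjection V x : EuclideanSpace ℝ (Fin d))
        (EuclideanGeometry.orthogonalProjection W x : EuclideanSpace ℝ (Fin d)) ≤ ε)
    (a : EuclideanSpace ℝ (Fin d)) (r : ℝ) (hr : 0 < r)
    (Q : Set (EuclideanSpace ℝ (Fin d)))
    (hQ : Q = {x | ∀ i, a i ≤ x i ∧ x i ≤ a i + r})
    (hQsub : Q ⊆ {x | ∀ i, 0 ≤ x i ∧ x i ≤ 1})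
    (I : Set (EuclideanSpace ℝ (Fin d)))
    (hI : I = {x ∈ (W : Set (EuclideanSpace ℝ (Fin d))) ∩ Q |
      2 * ε < Metric.infDist x (frontier Q)}) :
    I ⊆ (fun x => (EuclideanGeometry.orthogonalProjection W x : EuclideanSpace ℝ (Fin d))) ''
        ((V : Set (EuclideanSpace ℝ (Fin d))) ∩ Q) ∧
    μH[(m : ℝ)] I ≤ μH[(m : ℝ)] ((V : Set (EuclideanSpace ℝ (Fin d))) ∩ Q) := by
  have hd1 : 0 < d := by omega
  have hsub : I ⊆ (fun x => (EuclideanGeometry.orthogonalProjection W x :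
      EuclideanSpace ℝ (Fin d))) '' ((V : Set (EuclideanSpace ℝ (Fin d))) ∩ Q) := by
    intro x hx
    rw [hI] at hx
    obtain ⟨⟨hxW, hxQ⟩, hxd⟩ := hx
    have hxQ' : ∀ i, a i ≤ x i ∧ x i ≤ a i + r := by rw [hQ] at hxQ; exact hxQ
    -- margins from the frontier distance
    have hmargin : ∀ i, a i + 2*ε < x i ∧ x i < a i + r - 2*ε := by
      intro i
      have h1 := cube_margin a r hr x hxQ' i (a i) (Or.inl rfl)
      have h2 := cube_margin a r hr x hxQ' i (a i + r) (Or.inr rfl)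
      rw [← hQ] at h1 h2
      have e1 : |x i - a i| = x i - a i := abs_of_nonneg (by linarith [(hxQ' i).1])
      have e2 : |x i - (a i + r)| = a i + r - x i := by
        rw [abs_sub_comm]
        exact abs_of_nonneg (by linarith [(hxQ' i).2])
      rw [e1] at h1
      rw [e2] at h2
      constructor <;> linarith
    -- ε < 1/4
    set i0 : Fin d := ⟨0, hd1⟩
    have hr4 : 4 * ε < r := by
      have := hmargin i0
      linarith [this.1, this.2]
    have hr1 : r ≤ 1 := by
      have haQ : a ∈ Q := by
        rw [hQ]; intro i; exact ⟨le_refl _, by linarith⟩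
      have hzQ : (WithLp.toLp 2 (fun j => a j + r) : EuclideanSpace ℝ (Fin d)) ∈ Q := by
        rw [hQ]; intro i; simp only; exact ⟨by linarith, le_refl _⟩
      have h1 := (hQsub haQ) i0
      have h2 := (hQsub hzQ) i0
      simp only at h1 h2
      linarith [h1.1, h2.2]
    have hε4 : ε < 1/4 := by linarith
    have hlin := fun u => lin_close (V := V) (W := W) hclose u
    have hxWp : (EuclideanGeometry.orthogonalProjection W x :
        EuclideanSpace ℝ (Fin d)) = x :=
      (EuclideanGeometry.orthogonalProjection_eq_self_iff).mpr hxW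
    -- the restricted projection is bijective
    set g : V.direction →ₗ[ℝ] W.direction :=
      (Submodule.orthogonalProjectionOnto W.direction).toLinearMap ∘ₗ V.direction.subtype with hg
    have hginj : Function.Injective g := by
      rw [injective_iff_map_eq_zero]
      intro s hs
      have hcoe : (Submodule.orthogonalProjectionOnto W.direction (s : EuclideanSpace ℝ (Fin d)) :
          EuclideanSpace ℝ (Fin d)) = 0 := by
        have := congrArg (Subtype.val) hs
        simpa [hg] using this
      have hVs : (Submodule.orthogonalProjectionOnto V.direction (s : EuclideanSpace ℝ (Fin d)) :
          EuclideanSpace ℝ (Fin d)) = (s : EuclideanSpace ℝ (Fin d)) := by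
        rw [Submodule.coe_orthogonalProjectionOnto_apply, Submodule.starProjection_eq_self_iff]
        exact s.2
      have hl := hlin (s : EuclideanSpace ℝ (Fin d))
      rw [hVs, hcoe, sub_zero] at hl
      have hz : ‖(s : EuclideanSpace ℝ (Fin d))‖ = 0 := by
        have hmul : 2 * ε * ‖(s : EuclideanSpace ℝ (Fin d))‖
            ≤ (1/2) * ‖(s : EuclideanSpace ℝ (Fin d))‖ :=
          mul_le_mul_of_nonneg_right (by linarith) (norm_nonneg _)
        linarith [norm_nonneg (s : EuclideanSpace ℝ (Fin d))]
      exact Subtype.ext (norm_eq_zero.mp hz)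
    have hgsurj : Function.Surjective g :=
      (LinearMap.injective_iff_surjective_of_finrank_eq_finrank
        (by rw [hVdim, hWdim])).mp hginj
    -- solve for v ∈ V with π_W v = x
    set p : EuclideanSpace ℝ (Fin d) := (EuclideanGeometry.orthogonalProjection V x :
      EuclideanSpace ℝ (Fin d)) with hp
    have hpV : p ∈ V := EuclideanGeometry.orthogonalProjection_mem x
    have hbmem : x - (EuclideanGeometry.orthogonalProjection W p :
        EuclideanSpace ℝ (Fin d)) ∈ W.direction := by
      have h1 : (EuclideanGeometry.orthogonalProjection W p :
          EuclideanSpace ℝ (Fin d)) ∈ W := EuclideanGeometry.orthogonalProjection_mem p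
      have := AffineSubspace.vsub_mem_direction hxW h1
      simpa [vsub_eq_sub] using this
    obtain ⟨s, hs⟩ := hgsurj ⟨_, hbmem⟩
    set v : EuclideanSpace ℝ (Fin d) := (s : EuclideanSpace ℝ (Fin d)) + p with hv
    have hvV : v ∈ V := by
      have := AffineSubspace.vadd_mem_of_mem_direction s.2 hpV
      simpa [vadd_eq_add] using this
    have hproj : (Submodule.orthogonalProjectionOnto W.direction (s : EuclideanSpace ℝ (Fin d)) :
        EuclideanSpace ℝ (Fin d))
        = x - (EuclideanGeometry.orthogonalProjection W p : EuclideanSpace ℝ (Fin d)) := by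
      have := congrArg (Subtype.val) hs
      simpa [hg] using this
    have hWv : (EuclideanGeometry.orthogonalProjection W v :
        EuclideanSpace ℝ (Fin d)) = x := by
      rw [hv, proj_affine, hproj]
      abel
    -- bound ‖v - x‖
    set u : EuclideanSpace ℝ (Fin d) := v - x with hu
    have hux : u + x = v := by rw [hu]; abel
    have hVv : (EuclideanGeometry.orthogonalProjection V v :
        EuclideanSpace ℝ (Fin d)) = v :=
      (EuclideanGeometry.orthogonalProjection_eq_self_iff).mpr hvV
    have hVvexp := proj_affine V u x
    have hWvexp := proj_affine W u x
    rw [hux] at hVvexp hWvexp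
    rw [hVv] at hVvexp
    rw [hWv] at hWvexp
    have hexp : u = ((EuclideanGeometry.orthogonalProjection V x : EuclideanSpace ℝ (Fin d))
          - (EuclideanGeometry.orthogonalProjection W x : EuclideanSpace ℝ (Fin d)))
        + ((Submodule.orthogonalProjectionOnto V.direction u : EuclideanSpace ℝ (Fin d))
          - (Submodule.orthogonalProjectionOnto W.direction u : EuclideanSpace ℝ (Fin d))) := by
      calc u = v - x := hu
        _ = ((Submodule.orthogonalProjectionOnto V.direction u : EuclideanSpace ℝ (Fin d))
              + (EuclideanGeometry.orthogonalProjection V x : EuclideanSpace ℝ (Fin d)))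
            - ((Submodule.orthogonalProjectionOnto W.direction u : EuclideanSpace ℝ (Fin d))
              + (EuclideanGeometry.orthogonalProjection W x : EuclideanSpace ℝ (Fin d))) := by
          rw [← hVvexp, ← hWvexp]
        _ = _ := by abel
    have hclx := hclose x (hQsub hxQ)
    rw [dist_eq_norm] at hclx
    have hub : ‖u‖ ≤ 2 * ε := by
      have h1 : ‖u‖ ≤ ε + 2*ε*‖u‖ := by
        calc ‖u‖ = ‖_ + _‖ := congrArg norm hexp
          _ ≤ ‖(EuclideanGeometry.orthogonalProjection V x : EuclideanSpace ℝ (Fin d))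
                - (EuclideanGeometry.orthogonalProjection W x : EuclideanSpace ℝ (Fin d))‖
              + ‖(Submodule.orthogonalProjectionOnto V.direction u : EuclideanSpace ℝ (Fin d))
                - (Submodule.orthogonalProjectionOnto W.direction u : EuclideanSpace ℝ (Fin d))‖ :=
            norm_add_le _ _
          _ ≤ ε + 2*ε*‖u‖ := add_le_add hclx (hlin u)
      have hmul : 2 * ε * ‖u‖ ≤ (1/2) * ‖u‖ :=
        mul_le_mul_of_nonneg_right (by linarith) (norm_nonneg _)
      linarith [norm_nonneg u]
    have hvQ : v ∈ Q := by
      rw [hQ]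
      intro i
      have habs : |v i - x i| ≤ 2*ε := by
        have h := abs_coord_le_norm u i
        have hui : u i = v i - x i := rfl
        rw [hui] at h
        linarith
      have hm := hmargin i
      rw [abs_le] at habs
      constructor <;> linarith [habs.1, habs.2, hm.1, hm.2]
    exact ⟨v, ⟨hvV, hvQ⟩, hWv⟩
  refine ⟨hsub, ?_⟩
  have hlip : LipschitzWith 1 (fun y : EuclideanSpace ℝ (Fin d) =>
      (EuclideanGeometry.orthogonalProjection W y : EuclideanSpace ℝ (Fin d))) := by
    apply LipschitzWith.of_dist_le_mul
    intro y z
    have hyz : (EuclideanGeometry.orthogonalProjection W y : EuclideanSpace ℝ (Fin d))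
        = (Submodule.orthogonalProjectionOnto W.direction (y - z) : EuclideanSpace ℝ (Fin d))
          + (EuclideanGeometry.orthogonalProjection W z : EuclideanSpace ℝ (Fin d)) := by
      conv_lhs => rw [show y = (y - z) + z by abel]
      exact proj_affine W _ z
    rw [dist_eq_norm, dist_eq_norm, hyz, add_sub_cancel_right, NNReal.coe_one, one_mul]
    calc ‖(Submodule.orthogonalProjectionOnto W.direction (y - z) : EuclideanSpace ℝ (Fin d))‖
        = ‖Submodule.orthogonalProjectionOnto W.direction (y - z)‖ := rfl
      _ ≤ ‖Submodule.orthogonalProjectionOnto W.direction‖ * ‖y - z‖ :=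
          ContinuousLinearMap.le_opNorm _ _
      _ ≤ 1 * ‖y - z‖ :=
          mul_le_mul_of_nonneg_right (Submodule.orthogonalProjectionOnto_norm_le W.direction) (norm_nonneg _)
      _ = ‖y - z‖ := one_mul _
  have h2 := hlip.hausdorffMeasure_image_le
    (show (0:ℝ) ≤ (m : ℝ) by positivity) ((V : Set (EuclideanSpace ℝ (Fin d))) ∩ Q)
  simp only [ENNReal.coe_one, ENNReal.one_rpow, one_mul] at h2
  exact le_trans (measure_mono hsub) h2
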